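/- Let ρ > 0, ϑ > 0, λ₁⁺, λ₂⁺, λ₁⁻, λ₂⁻ > 0, and π ∈ [0, 1]. Write λ̄⁺ = πλ₁⁺ + (1−π)λ₂⁺ and λ̄⁻ = πλ₁⁻ + (1−π)λ₂⁻, and define h*(π) = (λ̄⁺+λ̄⁻)/(2ρ) − sqrt( ((λ̄⁺+λ̄⁻)/(2ρ) + 1/ϑ)² − 2λ̄⁺/(ϑρ) ). Then −1/ϑ < h*(π) < 1/ϑ, h*(π) satisfies λ̄⁺ϑ/(1+h*(π)ϑ) − λ̄⁻ϑ/(1−h*(π)ϑ) = ρ, and h*(π) is the unique global maximizer on (−1/ϑ, 1/ϑ) of the strictly concave function φ_π(h) = (1−h)ρ + λ̄⁺ log(1+hϑ) + λ̄⁻ log(1−hϑ). -/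

import Mathlib

/-- Partial information, two-state example: with filtered intensities
`λ̄⁺ = πλ₁⁺ + (1−π)λ₂⁺` and `λ̄⁻ = πλ₁⁻ + (1−π)λ₂⁻`, the explicit strategy
`h*(π) = (λ̄⁺+λ̄⁻)/(2ρ) − sqrt(((λ̄⁺+λ̄⁻)/(2ρ) + 1/ϑ)² − 2λ̄⁺/(ϑρ))` lies in
`(−1/ϑ, 1/ϑ)`, satisfies the filtered first-order condition, and is the unique global
maximizer on `(−1/ϑ, 1/ϑ)` of the strictly concave filtered log-utility objective
`φ_π(h) = (1−h)ρ + λ̄⁺ log(1+hϑ) + λ̄⁻ log(1−hϑ)`. -/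
theorem filtered_two_state_optimal_strategy
    (ρ ϑ l1p l2p l1m l2m π : ℝ) (hρ : 0 < ρ) (hϑ : 0 < ϑ)
    (h1p : 0 < l1p) (h2p : 0 < l2p) (h1m : 0 < l1m) (h2m : 0 < l2m)
    (hπ : π ∈ Set.Icc (0 : ℝ) 1)
    (lbp lbm : ℝ)
    (hbp : lbp = π * l1p + (1 - π) * l2p)
    (hbm : lbm = π * l1m + (1 - π) * l2m)
    (hstar : ℝ)
    (hdef : hstar = (lbp + lbm) / (2 * ρ) -
      Real.sqrt (((lbp + lbm) / (2 * ρ) + 1 / ϑ) ^ 2 - 2 * lbp / (ϑ * ρ))) :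
    (-(1 / ϑ) < hstar ∧ hstar < 1 / ϑ) ∧
    lbp * ϑ / (1 + hstar * ϑ) - lbm * ϑ / (1 - hstar * ϑ) = ρ ∧
    StrictConcaveOn ℝ (Set.Ioo (-(1 / ϑ)) (1 / ϑ))
      (fun h => (1 - h) * ρ + lbp * Real.log (1 + h * ϑ) + lbm * Real.log (1 - h * ϑ)) ∧
    ∀ h ∈ Set.Ioo (-(1 / ϑ)) (1 / ϑ), h ≠ hstar →
      (1 - h) * ρ + lbp * Real.log (1 + h * ϑ) + lbm * Real.log (1 - h * ϑ) <
      (1 - hstar) * ρ + lbp * Real.log (1 + hstar * ϑ) + lbm * Real.log (1 - hstar * ϑ) := by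
  obtain ⟨hπ0, hπ1⟩ := hπ
  have ha : 0 < lbp := by
    rw [hbp]
    nlinarith [mul_nonneg hπ0 h1p.le, mul_nonneg (sub_nonneg.2 hπ1) h2p.le]
  have hb : 0 < lbm := by
    rw [hbm]
    nlinarith [mul_nonneg hπ0 h1m.le, mul_nonneg (sub_nonneg.2 hπ1) h2m.le]
  have hS : 0 < (lbp + lbm) / (2 * ρ) := by positivity
  have hDeq : ((lbp + lbm) / (2 * ρ) + 1 / ϑ) ^ 2 - 2 * lbp / (ϑ * ρ)
      = ((lbp + lbm) / (2 * ρ) - 1 / ϑ) ^ 2 + 2 * lbm / (ϑ * ρ) := by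
    field_simp
    ring
  have hD : 0 ≤ ((lbp + lbm) / (2 * ρ) + 1 / ϑ) ^ 2 - 2 * lbp / (ϑ * ρ) := by
    rw [hDeq]; positivity
  have hsd : Real.sqrt (((lbp + lbm) / (2 * ρ) + 1 / ϑ) ^ 2 - 2 * lbp / (ϑ * ρ))
      = (lbp + lbm) / (2 * ρ) - hstar := by rw [hdef]; ring
  have hsq : ((lbp + lbm) / (2 * ρ) - hstar) ^ 2
      = ((lbp + lbm) / (2 * ρ) + 1 / ϑ) ^ 2 - 2 * lbp / (ϑ * ρ) := by
    rw [← hsd]; exact Real.sq_sqrt hD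
  have hub : hstar < 1 / ϑ := by
    have h1 : (lbp + lbm) / (2 * ρ) - 1 / ϑ
        < Real.sqrt (((lbp + lbm) / (2 * ρ) + 1 / ϑ) ^ 2 - 2 * lbp / (ϑ * ρ)) := by
      rcases lt_or_ge ((lbp + lbm) / (2 * ρ) - 1 / ϑ) 0 with hc | hc
      · have hpos : 0 < ((lbp + lbm) / (2 * ρ) + 1 / ϑ) ^ 2 - 2 * lbp / (ϑ * ρ) := by
          rw [hDeq]; positivity
        exact hc.trans (Real.sqrt_pos.2 hpos)
      · rw [Real.lt_sqrt hc, hDeq]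
        have : 0 < 2 * lbm / (ϑ * ρ) := by positivity
        linarith
    rw [hsd] at h1
    linarith
  have hlb : -(1 / ϑ) < hstar := by
    have h1 : Real.sqrt (((lbp + lbm) / (2 * ρ) + 1 / ϑ) ^ 2 - 2 * lbp / (ϑ * ρ))
        < (lbp + lbm) / (2 * ρ) + 1 / ϑ := by
      have hpos : 0 < (lbp + lbm) / (2 * ρ) + 1 / ϑ := by positivity
      rw [Real.sqrt_lt' hpos]
      have : 0 < 2 * lbp / (ϑ * ρ) := by positivity
      linarith
    rw [hsd] at h1
    linarith
  have hP : 0 < 1 + hstar * ϑ := by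
    have := mul_lt_mul_of_pos_right hlb hϑ
    rw [neg_mul, one_div, inv_mul_cancel₀ hϑ.ne'] at this
    linarith
  have hM : 0 < 1 - hstar * ϑ := by
    have := mul_lt_mul_of_pos_right hub hϑ
    rw [one_div, inv_mul_cancel₀ hϑ.ne'] at this
    linarith
  have hq : ρ * ϑ^2 * hstar^2 - (lbp + lbm) * ϑ^2 * hstar + (lbp - lbm) * ϑ - ρ = 0 := by
    field_simp at hsq
    have hq' : (ρ * ϑ^2 * hstar^2 - (lbp + lbm) * ϑ^2 * hstar + (lbp - lbm) * ϑ - ρ)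
        * (16 * ρ^4 * ϑ) = 0 := by
      linear_combination (4 * ρ^3 * ϑ) * hsq
    have hne : (16 * ρ^4 * ϑ) ≠ 0 := by positivity
    exact (mul_eq_zero.mp hq').resolve_right hne
  have hfoc : lbp * ϑ / (1 + hstar * ϑ) - lbm * ϑ / (1 - hstar * ϑ) = ρ := by
    rw [div_sub_div _ _ hP.ne' hM.ne',
      div_eq_iff (by positivity : (0:ℝ) < (1 + hstar * ϑ) * (1 - hstar * ϑ)).ne']
    linear_combination hq
  refine ⟨⟨hlb, hub⟩, hfoc, ?_, ?_⟩
  · refine ⟨convex_Ioo _ _, ?_⟩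
    rintro x ⟨hx1, hx2⟩ y ⟨hy1, hy2⟩ hxy t u ht hu htu
    have hϑx := mul_lt_mul_of_pos_right hx1 hϑ
    have hϑx2 := mul_lt_mul_of_pos_right hx2 hϑ
    have hϑy := mul_lt_mul_of_pos_right hy1 hϑ
    have hϑy2 := mul_lt_mul_of_pos_right hy2 hϑ
    rw [neg_mul, one_div, inv_mul_cancel₀ hϑ.ne'] at hϑx hϑy
    rw [one_div, inv_mul_cancel₀ hϑ.ne'] at hϑx2 hϑy2
    have hxP : (0:ℝ) < 1 + x * ϑ := by linarith
    have hxM : (0:ℝ) < 1 - x * ϑ := by linarith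
    have hyP : (0:ℝ) < 1 + y * ϑ := by linarith
    have hyM : (0:ℝ) < 1 - y * ϑ := by linarith
    have hne1 : (1 + x * ϑ) ≠ (1 + y * ϑ) := by
      intro hc
      exact hxy (mul_right_cancel₀ hϑ.ne' (by linarith))
    have hne2 : (1 - x * ϑ) ≠ (1 - y * ϑ) := by
      intro hc
      exact hxy (mul_right_cancel₀ hϑ.ne' (by linarith))
    have key1 := strictConcaveOn_log_Ioi.2 (Set.mem_Ioi.2 hxP) (Set.mem_Ioi.2 hyP)
      hne1 ht hu htu
    have key2 := strictConcaveOn_log_Ioi.2 (Set.mem_Ioi.2 hxM) (Set.mem_Ioi.2 hyM)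
      hne2 ht hu htu
    simp only [smul_eq_mul] at key1 key2 ⊢
    have e1 : t * (1 + x * ϑ) + u * (1 + y * ϑ) = 1 + (t * x + u * y) * ϑ := by
      linear_combination htu
    have e2 : t * (1 - x * ϑ) + u * (1 - y * ϑ) = 1 - (t * x + u * y) * ϑ := by
      linear_combination htu
    rw [e1] at key1
    rw [e2] at key2
    have c1 := mul_lt_mul_of_pos_left key1 ha
    have c2 := mul_lt_mul_of_pos_left key2 hb
    have elin : (1 - (t * x + u * y)) * ρ = t * ((1 - x) * ρ) + u * ((1 - y) * ρ) := by
      linear_combination -ρ * htu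
    linarith [c1, c2, elin]
  · rintro h ⟨hh1, hh2⟩ hne
    have hϑh := mul_lt_mul_of_pos_right hh1 hϑ
    have hϑh2 := mul_lt_mul_of_pos_right hh2 hϑ
    rw [neg_mul, one_div, inv_mul_cancel₀ hϑ.ne'] at hϑh
    rw [one_div, inv_mul_cancel₀ hϑ.ne'] at hϑh2
    have hhP : (0:ℝ) < 1 + h * ϑ := by linarith
    have hhM : (0:ℝ) < 1 - h * ϑ := by linarith
    have hr1 : (1 + h * ϑ) / (1 + hstar * ϑ) ≠ 1 := by
      intro hc
      rw [div_eq_one_iff_eq hP.ne'] at hc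
      exact hne (mul_right_cancel₀ hϑ.ne' (by linarith))
    have hr2 : (1 - h * ϑ) / (1 - hstar * ϑ) ≠ 1 := by
      intro hc
      rw [div_eq_one_iff_eq hM.ne'] at hc
      exact hne (mul_right_cancel₀ hϑ.ne' (by linarith))
    have L1 : Real.log ((1 + h * ϑ) / (1 + hstar * ϑ))
        < (1 + h * ϑ) / (1 + hstar * ϑ) - 1 :=
      Real.log_lt_sub_one_of_pos (by positivity) hr1
    have L2 : Real.log ((1 - h * ϑ) / (1 - hstar * ϑ))
        < (1 - h * ϑ) / (1 - hstar * ϑ) - 1 :=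
      Real.log_lt_sub_one_of_pos (by positivity) hr2
    rw [Real.log_div hhP.ne' hP.ne'] at L1
    rw [Real.log_div hhM.ne' hM.ne'] at L2
    have key : lbp * ((1 + h * ϑ) / (1 + hstar * ϑ) - 1)
        + lbm * ((1 - h * ϑ) / (1 - hstar * ϑ) - 1) = (h - hstar) * ρ := by
      rw [← hfoc]
      rw [div_sub_one hP.ne', div_sub_one hM.ne']
      ring
    linarith [mul_lt_mul_of_pos_left L1 ha, mul_lt_mul_of_pos_left L2 hb, key]
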